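/- If reduced words u, v, x satisfy [u·v] ≈ u·x (the non-splitting reduct of u·v equals u concatenated with x), then x is a final subword of v; in particular x commutes with every word that commutes with v. -/

import Mathlib

variable {V : Type*} [DecidableEq V] [Fintype V]

/-- A letter is a nonempty connected subset of the graph `G`
(connectedness of the induced subgraph includes nonemptiness). -/
def IsLetter (G : SimpleGraph V) (s : Finset V) : Prop :=
  (G.induce (↑s : Set V)).Connected

/-- The type of letters of `G`. -/
def Letter (G : SimpleGraph V) := {s : Finset V // IsLetter G s}

/-- A word is a finite sequence of letters. -/
abbrev Word (G : SimpleGraph V) := List (Letter G)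

/-- Two letters commute iff their union is not a letter (is disconnected). -/
def LCommute (G : SimpleGraph V) (s t : Letter G) : Prop :=
  ¬ IsLetter G (s.1 ∪ t.1)

/-- Two words commute if their letters pairwise commute. -/
def WCommute (G : SimpleGraph V) (u v : Word G) : Prop :=
  ∀ s ∈ u, ∀ t ∈ v, LCommute G s t

/-- One swap of two adjacent commuting letters. -/
def LSwapStep (G : SimpleGraph V) (w w' : Word G) : Prop :=
  ∃ (a b : Word G) (s t : Letter G), LCommute G s t ∧
    w = a ++ s :: t :: b ∧ w' = a ++ t :: s :: b

/-- Equivalence (`≈`) of words: sequences of swaps of adjacent commuting letters. -/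
def WEquiv (G : SimpleGraph V) : Word G → Word G → Prop :=
  Relation.ReflTransGen (LSwapStep G)

/-- A word is reduced if there is no pair of comparable letters such that the
smaller one commutes with all letters strictly in between. -/
def WIsReduced (G : SimpleGraph V) (w : Word G) : Prop :=
  ¬ ∃ (a b c : Word G) (s t : Letter G),
      w = a ++ s :: (b ++ t :: c) ∧
      ((s.1 ⊆ t.1 ∧ ∀ r ∈ b, LCommute G s r) ∨
       (t.1 ⊆ s.1 ∧ ∀ r ∈ b, LCommute G t r))

/-- A splitting of a letter `s`: a (possibly empty) word whose letters are
proper subsets of `s`. -/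
def IsSplitting (G : SimpleGraph V) (x : Word G) (s : Letter G) : Prop :=
  ∀ t ∈ x, t.1 ⊂ s.1

/-- `SplitStep G u v`: `u` is obtained from `v` by replacing one occurrence of a
letter by a splitting of it. -/
def SplitStep (G : SimpleGraph V) (u v : Word G) : Prop :=
  ∃ (a b x : Word G) (s : Letter G),
    v = a ++ s :: b ∧ IsSplitting G x s ∧ u = a ++ x ++ b

/-- One step of the splitting order up to equivalence. -/
def PrecStep (G : SimpleGraph V) (u v : Word G) : Prop :=
  ∃ u' v', WEquiv G v v' ∧ SplitStep G u' v' ∧ WEquiv G u u'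

/-- The splitting order `≺` on words. -/
def WPrec (G : SimpleGraph V) : Word G → Word G → Prop :=
  Relation.TransGen (PrecStep G)

/-- `u ≼ v` : `u ≺ v` or `u ≈ v`. -/
def WPreceq (G : SimpleGraph V) (u v : Word G) : Prop :=
  WPrec G u v ∨ WEquiv G u v

/-- Absorption: if `s ⊆ t`, replace a subword `s·t` (or `t·s`) by `t`. -/
def AbsorbStep (G : SimpleGraph V) (w w' : Word G) : Prop :=
  ∃ (a b : Word G) (s t : Letter G), s.1 ⊆ t.1 ∧
    (w = a ++ s :: t :: b ∨ w = a ++ t :: s :: b) ∧ w' = a ++ t :: b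

/-- A non-splitting reduction step: Commutation or Absorption. -/
def NSStep (G : SimpleGraph V) (w w' : Word G) : Prop :=
  LSwapStep G w w' ∨ AbsorbStep G w w'

/-- `NSRed G u v`: `v` is a non-splitting reduction of `u`, i.e. a reduced word
obtained from `u` by Commutation and Absorption steps only. -/
def NSRed (G : SimpleGraph V) (u v : Word G) : Prop :=
  Relation.ReflTransGen (NSStep G) u v ∧ WIsReduced G v

/-- The letter `t` is left-absorbed by the word `w`: `t` is contained in some
letter of `w` and commutes with all earlier letters. -/
def LetterLeftAbsorbed (G : SimpleGraph V) (t : Letter G) (w : Word G) : Prop :=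
  ∃ (a b : Word G) (s : Letter G), w = a ++ s :: b ∧ t.1 ⊆ s.1 ∧ ∀ r ∈ a, LCommute G t r

/-- The letter `t` is right-absorbed by the word `w`. -/
def LetterRightAbsorbed (G : SimpleGraph V) (t : Letter G) (w : Word G) : Prop :=
  ∃ (a b : Word G) (s : Letter G), w = a ++ s :: b ∧ t.1 ⊆ s.1 ∧ ∀ r ∈ b, LCommute G t r

/-- The letter `t` is properly left-absorbed by the word `w`. -/
def LetterProperLeftAbsorbed (G : SimpleGraph V) (t : Letter G) (w : Word G) : Prop :=
  ∃ (a b : Word G) (s : Letter G), w = a ++ s :: b ∧ t.1 ⊂ s.1 ∧ ∀ r ∈ a, LCommute G t r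

/-- The letter `t` is properly right-absorbed by the word `w`. -/
def LetterProperRightAbsorbed (G : SimpleGraph V) (t : Letter G) (w : Word G) : Prop :=
  ∃ (a b : Word G) (s : Letter G), w = a ++ s :: b ∧ t.1 ⊂ s.1 ∧ ∀ r ∈ b, LCommute G t r

/-- A word `u` is left-absorbed by `w` if each of its letters is. -/
def LeftAbsorbed (G : SimpleGraph V) (u w : Word G) : Prop :=
  ∀ t ∈ u, LetterLeftAbsorbed G t w

/-- A word `u` is right-absorbed by `w` if each of its letters is. -/
def RightAbsorbed (G : SimpleGraph V) (u w : Word G) : Prop :=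
  ∀ t ∈ u, LetterRightAbsorbed G t w

/-- A word `u` is properly left-absorbed by `w` if each of its letters is. -/
def ProperLeftAbsorbed (G : SimpleGraph V) (u w : Word G) : Prop :=
  ∀ t ∈ u, LetterProperLeftAbsorbed G t w

/-- A word `u` is properly right-absorbed by `w` if each of its letters is. -/
def ProperRightAbsorbed (G : SimpleGraph V) (u w : Word G) : Prop :=
  ∀ t ∈ u, LetterProperRightAbsorbed G t w

/-- A commuting word: its letters pairwise commute. -/
def IsCommuting (G : SimpleGraph V) (u : Word G) : Prop :=
  List.Pairwise (LCommute G) u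

/-- The letter `s` is an end of the word `u` if `u ≈ v·s` for some `v`. -/
def IsEnd (G : SimpleGraph V) (s : Letter G) (u : Word G) : Prop :=
  ∃ v, WEquiv G u (v ++ [s])

/-- `t` is the final segment of `u`: the commuting word consisting of all ends of `u`. -/
def IsFinalSegment (G : SimpleGraph V) (t u : Word G) : Prop :=
  IsCommuting G t ∧ ∀ s, s ∈ t ↔ IsEnd G s u

section AuxGraph
set_option linter.unusedSectionVars false

variable {G : SimpleGraph V}

lemma aux_letter_nonempty (s : Letter G) : s.1.Nonempty := by
  obtain ⟨⟨v, hv⟩⟩ := s.2.nonempty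
  exact ⟨v, by exact_mod_cast hv⟩

lemma aux_lcomm_symm {s t : Letter G} (h : LCommute G s t) : LCommute G t s := by
  unfold LCommute at *
  rwa [Finset.union_comm]

lemma aux_not_lcomm_of_subset {s t : Letter G} (h : s.1 ⊆ t.1) : ¬ LCommute G s t := by
  intro hc
  apply hc
  have : s.1 ∪ t.1 = t.1 := Finset.union_eq_right.mpr h
  rw [this]
  exact t.2

lemma aux_mono {s t r : Letter G} (hst : s.1 ⊆ t.1) (h : LCommute G r t) :
    LCommute G r s := by
  intro hc
  apply h
  have h1 : (↑(r.1 ∪ s.1) : Set V) = (↑r.1 : Set V) ∪ ↑s.1 := by push_cast; rfl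
  have hconn : (G.induce ((↑(r.1 ∪ s.1) : Set V) ∪ ↑t.1)).Connected := by
    refine SimpleGraph.induce_union_connected hc.preconnected t.2.preconnected ?_
    obtain ⟨a, ha⟩ := aux_letter_nonempty s
    exact ⟨a, by simp [h1, ha], by exact_mod_cast hst ha⟩
  have h2 : ((↑(r.1 ∪ s.1) : Set V) ∪ ↑t.1) = (↑(r.1 ∪ t.1) : Set V) := by
    push_cast
    rw [Set.union_assoc]
    congr 1
    exact Set.union_eq_right.mpr (by exact_mod_cast hst)
  rwa [h2] at hconn

end AuxGraph
section AuxEquiv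
set_option linter.unusedSectionVars false

variable {G : SimpleGraph V}

lemma aux_swap_symm {w w' : Word G} (h : LSwapStep G w w') : LSwapStep G w' w := by
  obtain ⟨a, b, s, t, hc, h1, h2⟩ := h
  exact ⟨a, b, t, s, aux_lcomm_symm hc, h2, h1⟩

lemma aux_weq_refl (w : Word G) : WEquiv G w w := Relation.ReflTransGen.refl

lemma aux_weq_trans {a b c : Word G} (h1 : WEquiv G a b) (h2 : WEquiv G b c) :
    WEquiv G a c := Relation.ReflTransGen.trans h1 h2

lemma aux_weq_symm {a b : Word G} (h : WEquiv G a b) : WEquiv G b a :=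
  haveI : Std.Symm (LSwapStep G) := ⟨fun _ _ => aux_swap_symm⟩
  Std.Symm.symm (r := Relation.ReflTransGen (LSwapStep G)) _ _ h

lemma aux_weq_of_eq {a b : Word G} (h : a = b) : WEquiv G a b := h ▸ aux_weq_refl a

lemma aux_swap_append_left {a b : Word G} (c : Word G) (h : LSwapStep G a b) :
    LSwapStep G (c ++ a) (c ++ b) := by
  obtain ⟨α, β, s, t, hc, h1, h2⟩ := h
  exact ⟨c ++ α, β, s, t, hc, by rw [h1, List.append_assoc], by rw [h2, List.append_assoc]⟩

lemma aux_swap_append_right {a b : Word G} (c : Word G) (h : LSwapStep G a b) :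
    LSwapStep G (a ++ c) (b ++ c) := by
  obtain ⟨α, β, s, t, hc, h1, h2⟩ := h
  exact ⟨α, β ++ c, s, t, hc, by simp [h1], by simp [h2]⟩

lemma aux_weq_append_left {a b : Word G} (c : Word G) (h : WEquiv G a b) :
    WEquiv G (c ++ a) (c ++ b) :=
  Relation.ReflTransGen.lift (r := LSwapStep G) (fun w => c ++ w) (fun _ _ hr => aux_swap_append_left c hr) _ _ h

lemma aux_weq_append_right {a b : Word G} (c : Word G) (h : WEquiv G a b) :
    WEquiv G (a ++ c) (b ++ c) :=
  Relation.ReflTransGen.lift (r := LSwapStep G) (fun w => w ++ c) (fun _ _ hr => aux_swap_append_right c hr) _ _ h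

lemma aux_weq_append {a b c d : Word G} (h1 : WEquiv G a b) (h2 : WEquiv G c d) :
    WEquiv G (a ++ c) (b ++ d) :=
  aux_weq_trans (aux_weq_append_right c h1) (aux_weq_append_left b h2)

lemma aux_swap_single {s t : Letter G} (a b : Word G) (h : LCommute G s t) :
    WEquiv G (a ++ s :: t :: b) (a ++ t :: s :: b) :=
  Relation.ReflTransGen.single ⟨a, b, s, t, h, rfl, rfl⟩

lemma aux_swap_single' {s t : Letter G} (b : Word G) (h : LCommute G s t) :
    WEquiv G (s :: t :: b) (t :: s :: b) := aux_swap_single [] b h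

/-- move a letter commuting with a block to the front -/
lemma aux_move_front {s : Letter G} {c : Word G} (hc : ∀ r ∈ c, LCommute G s r)
    (d : Word G) : WEquiv G (c ++ s :: d) (s :: (c ++ d)) := by
  induction c with
  | nil => exact aux_weq_refl _
  | cons a c' ih =>
    have h1 : WEquiv G (c' ++ s :: d) (s :: (c' ++ d)) :=
      ih (fun r hr => hc r (List.mem_cons_of_mem a hr))
    have h2 : WEquiv G (a :: (c' ++ s :: d)) (a :: s :: (c' ++ d)) :=
      aux_weq_append_left [a] h1
    have h3 : WEquiv G (a :: s :: (c' ++ d)) (s :: a :: (c' ++ d)) :=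
      aux_swap_single' _ (aux_lcomm_symm (hc a List.mem_cons_self))
    exact aux_weq_trans h2 h3

lemma aux_move_back {s : Letter G} {c : Word G} (hc : ∀ r ∈ c, LCommute G s r)
    (d : Word G) : WEquiv G (s :: (c ++ d)) (c ++ s :: d) :=
  aux_weq_symm (aux_move_front hc d)

lemma aux_weq_perm {a b : Word G} (h : WEquiv G a b) : a.Perm b := by
  induction h with
  | refl => exact List.Perm.refl _
  | tail _ hstep ih =>
    obtain ⟨α, β, s, t, _, h1, h2⟩ := hstep
    exact ih.trans (by rw [h1, h2]; exact List.Perm.append_left _ (List.Perm.swap t s β))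

/-- generic invariant propagation along ReflTransGen -/
lemma aux_rtg_invariant {α : Type*} {step : α → α → Prop} {P : α → Prop}
    (hstep : ∀ a b, step a b → P a → P b) {x y : α}
    (h : Relation.ReflTransGen step x y) : P x → P y := by
  induction h with
  | refl => exact id
  | tail _ st ih => exact fun px => hstep _ _ st (ih px)

/-- two-list location lemma -/
lemma aux_loc2 {α : Type*} {l₁ l₂ a b : List α} {x y : α}
    (h : l₁ ++ l₂ = a ++ x :: y :: b) :
    (∃ γ, l₁ = a ++ x :: y :: γ ∧ b = γ ++ l₂) ∨
    (l₁ = a ++ [x] ∧ l₂ = y :: b) ∨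
    (∃ γ, l₂ = γ ++ x :: y :: b ∧ a = l₁ ++ γ) := by
  rcases List.append_eq_append_iff.mp h with ⟨a', ha, hb⟩ | ⟨c', hc, hd⟩
  · exact Or.inr (Or.inr ⟨a', hb, ha⟩)
  · match c', hc, hd with
    | [], hc, hd =>
      exact Or.inr (Or.inr ⟨[], by simpa using hd.symm, by simpa using hc.symm⟩)
    | [x'], hc, hd =>
      simp only [List.cons_append, List.nil_append] at hd
      injection hd with e1 e2
      exact Or.inr (Or.inl ⟨by rw [hc, e1], e2.symm⟩)
    | x' :: y' :: γ, hc, hd =>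
      simp only [List.cons_append] at hd
      injection hd with e1 hd
      injection hd with e2 hd
      exact Or.inl ⟨γ, by rw [hc, e1, e2], hd⟩

end AuxEquiv
section AuxFirst
set_option linter.unusedSectionVars false

variable {G : SimpleGraph V}

private def FirstInv (G : SimpleGraph V) (h : Letter G) (A : Word G) (C : Word G) : Prop :=
  ∃ W₁ W₂, C = W₁ ++ h :: W₂ ∧ (∀ c ∈ W₁, LCommute G h c) ∧ WEquiv G A (W₁ ++ W₂)

private lemma firstInv_step {h : Letter G} {A : Word G} {C C' : Word G}
    (hsw : LSwapStep G C C') (hI : FirstInv G h A C) : FirstInv G h A C' := by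
  obtain ⟨W₁, W₂, hC, hcm, hA⟩ := hI
  obtain ⟨α, β, x, y, hxy, h1, h2⟩ := hsw
  have heq : W₁ ++ h :: W₂ = α ++ x :: y :: β := by rw [← hC, h1]
  rcases aux_loc2 heq with ⟨γ, hW₁, hβ⟩ | ⟨hW₁, hW₂⟩ | ⟨γ, hl₂, hα⟩
  · refine ⟨α ++ y :: x :: γ, W₂, ?_, ?_, ?_⟩
    · rw [h2, hβ]; simp
    · intro c hcm'
      apply hcm
      rw [hW₁]
      simp only [List.mem_append, List.mem_cons] at hcm' ⊢
      tauto
    · refine aux_weq_trans hA ?_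
      rw [hW₁]
      have := aux_swap_single (G := G) (s := x) (t := y) α (γ ++ W₂) hxy
      simpa using this
  · -- W₁ = α ++ [x], h :: W₂ = y :: β ; swapped pair is (x, h)
    injection hW₂ with e1 e2
    subst e1
    refine ⟨α, x :: W₂, ?_, ?_, ?_⟩
    · rw [h2, e2]
    · intro c hc'
      exact hcm c (by rw [hW₁]; simp [hc'])
    · refine aux_weq_trans hA (aux_weq_of_eq ?_)
      rw [hW₁]; simp
  · match γ, hl₂, hα with
    | [], hl₂, hα =>
      simp only [List.nil_append] at hl₂
      injection hl₂ with e1 e2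
      subst e1
      refine ⟨W₁ ++ [y], β, ?_, ?_, ?_⟩
      · rw [h2, hα]; simp
      · intro c hc'
        rcases List.mem_append.mp hc' with hc' | hc'
        · exact hcm c hc'
        · simp only [List.mem_singleton] at hc'
          subst hc'
          exact hxy
      · refine aux_weq_trans hA (aux_weq_of_eq ?_)
        rw [e2]; simp
    | h' :: γ', hl₂, hα =>
      simp only [List.cons_append] at hl₂
      injection hl₂ with e1 e2
      subst e1
      refine ⟨W₁, γ' ++ y :: x :: β, ?_, hcm, ?_⟩
      · rw [h2, hα]; simp
      · refine aux_weq_trans hA ?_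
        rw [e2]
        have := aux_swap_single (G := G) (s := x) (t := y) (W₁ ++ γ') β hxy
        simpa using this

lemma aux_first {h : Letter G} {A W : Word G} (he : WEquiv G (h :: A) W) :
    ∃ W₁ W₂, W = W₁ ++ h :: W₂ ∧ (∀ c ∈ W₁, LCommute G h c) ∧ WEquiv G A (W₁ ++ W₂) := by
  have := aux_rtg_invariant (P := FirstInv G h A) (fun _ _ st hI => firstInv_step st hI) he
  exact this ⟨[], A, rfl, by simp, aux_weq_refl _⟩

lemma aux_not_lcomm_self (s : Letter G) : ¬ LCommute G s s :=
  aux_not_lcomm_of_subset (subset_refl _)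

lemma aux_cancel : ∀ (z : Word G) {a b : Word G}, WEquiv G (z ++ a) (z ++ b) → WEquiv G a b := by
  intro z
  induction z with
  | nil => intro a b h; simpa using h
  | cons hd z' ih =>
    intro a b h
    have h' : WEquiv G (hd :: (z' ++ a)) (hd :: (z' ++ b)) := by simpa using h
    obtain ⟨W₁, W₂, hW, hcm, hA⟩ := aux_first h'
    match W₁, hW with
    | [], hW =>
      simp only [List.nil_append] at hW
      injection hW with _ e2
      exact ih (by rw [← e2] at hA; simpa using hA)
    | c :: W₁', hW =>
      exfalso
      injection hW with e1 _
      subst e1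
      exact aux_not_lcomm_self hd (hcm hd (by simp))
end AuxFirst
section AuxHasPat
set_option linter.unusedSectionVars false

variable {G : SimpleGraph V}

def HasPat (G : SimpleGraph V) (w : Word G) : Prop :=
  ∃ (a b c : Word G) (s t : Letter G),
      w = a ++ s :: (b ++ t :: c) ∧
      ((s.1 ⊆ t.1 ∧ ∀ r ∈ b, LCommute G s r) ∨
       (t.1 ⊆ s.1 ∧ ∀ r ∈ b, LCommute G t r))

lemma aux_reduced_iff_not_haspat {w : Word G} : WIsReduced G w ↔ ¬ HasPat G w :=
  Iff.rfl

private lemma haspat_swap {w w' : Word G} (hsw : LSwapStep G w w') (hp : HasPat G w) :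
    HasPat G w' := by
  obtain ⟨a, b, c, s, t, hw, hcond⟩ := hp
  obtain ⟨α, β, x, y, hxy, h1, h2⟩ := hsw
  have heq : a ++ s :: (b ++ t :: c) = α ++ x :: y :: β := by rw [← hw, h1]
  rcases aux_loc2 heq with ⟨γ, ha, hβ⟩ | ⟨ha, hl₂⟩ | ⟨γ, hl₂, hα⟩
  · exact ⟨α ++ y :: x :: γ, b, c, s, t, by rw [h2, hβ]; simp, hcond⟩
  · -- a = α ++ [x], s :: (b ++ t :: c) = y :: β : swapped pair (x, s)
    injection hl₂ with e1 e2
    subst e1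
    refine ⟨α, x :: b, c, s, t, by rw [h2, ← e2]; simp, ?_⟩
    rcases hcond with ⟨hst, hb⟩ | ⟨hts, hb⟩
    · refine Or.inl ⟨hst, ?_⟩
      intro r hr
      rcases List.mem_cons.mp hr with rfl | hr
      · exact aux_lcomm_symm hxy
      · exact hb r hr
    · refine Or.inr ⟨hts, ?_⟩
      intro r hr
      rcases List.mem_cons.mp hr with rfl | hr
      · exact aux_lcomm_symm (aux_mono hts hxy)
      · exact hb r hr
  · match γ, hl₂, hα with
    | [], hl₂, hα =>
      simp only [List.nil_append] at hl₂
      injection hl₂ with e1 e2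
      subst e1
      match b, e2 with
      | [], e2 =>
        simp only [List.nil_append] at e2
        injection e2 with e3 _
        subst e3
        rcases hcond with ⟨hst, _⟩ | ⟨hts, _⟩
        · exact absurd hxy (aux_not_lcomm_of_subset hst)
        · exact absurd (aux_lcomm_symm hxy) (aux_not_lcomm_of_subset hts)
      | z :: b', e2 =>
        simp only [List.cons_append] at e2
        injection e2 with e3 e4
        subst e3
        refine ⟨a ++ [z], b', c, s, t, by rw [h2, hα, ← e4]; simp, ?_⟩
        rcases hcond with ⟨hst, hb⟩ | ⟨hts, hb⟩
        · exact Or.inl ⟨hst, fun r hr => hb r (by simp [hr])⟩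
        · exact Or.inr ⟨hts, fun r hr => hb r (by simp [hr])⟩
    | s' :: γ', hl₂, hα =>
      simp only [List.cons_append] at hl₂
      injection hl₂ with e1 e2
      subst e1
      rcases aux_loc2 e2 with ⟨δ, hb, hβ⟩ | ⟨hb, hl₃⟩ | ⟨δ, hl₃, hγ'⟩
      · -- swap inside b
        refine ⟨a, γ' ++ y :: x :: δ, c, s, t, by rw [h2, hα, hβ]; simp, ?_⟩
        have hmem : ∀ r ∈ γ' ++ y :: x :: δ, r ∈ b := by
          intro r hr
          rw [hb]
          simp only [List.mem_append, List.mem_cons] at hr ⊢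
          tauto
        rcases hcond with ⟨hst, hb'⟩ | ⟨hts, hb'⟩
        · exact Or.inl ⟨hst, fun r hr => hb' r (hmem r hr)⟩
        · exact Or.inr ⟨hts, fun r hr => hb' r (hmem r hr)⟩
      · -- b = γ' ++ [x], t :: c = y :: β : swapped pair (x, t)
        injection hl₃ with e3 e4
        subst e3
        refine ⟨a, γ', x :: c, s, t, by rw [h2, hα, e4]; simp, ?_⟩
        rcases hcond with ⟨hst, hb'⟩ | ⟨hts, hb'⟩
        · exact Or.inl ⟨hst, fun r hr => hb' r (by rw [hb]; simp [hr])⟩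
        · exact Or.inr ⟨hts, fun r hr => hb' r (by rw [hb]; simp [hr])⟩
      · match δ, hl₃, hγ' with
        | [], hl₃, hγ' =>
          simp only [List.nil_append] at hl₃
          injection hl₃ with e3 e4
          subst e3
          refine ⟨a, b ++ [y], β, s, t, by rw [h2, hα, hγ']; simp [e4], ?_⟩
          rcases hcond with ⟨hst, hb'⟩ | ⟨hts, hb'⟩
          · refine Or.inl ⟨hst, ?_⟩
            intro r hr
            rcases List.mem_append.mp hr with hr | hr
            · exact hb' r hr
            · simp only [List.mem_singleton] at hr
              subst hr
              exact aux_lcomm_symm (aux_mono hst (aux_lcomm_symm hxy))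
          · refine Or.inr ⟨hts, ?_⟩
            intro r hr
            rcases List.mem_append.mp hr with hr | hr
            · exact hb' r hr
            · simp only [List.mem_singleton] at hr
              subst hr
              exact hxy
        | z :: δ', hl₃, hγ' =>
          simp only [List.cons_append] at hl₃
          injection hl₃ with e3 e4
          subst e3
          exact ⟨a, b, δ' ++ y :: x :: β, s, t, by rw [h2, hα, hγ']; simp, hcond⟩

lemma aux_haspat_equiv {w w' : Word G} (he : WEquiv G w w') (hp : HasPat G w) :
    HasPat G w' :=
  aux_rtg_invariant (P := HasPat G) (fun _ _ st h => haspat_swap st h) he hp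

end AuxHasPat
section AuxLoc
set_option linter.unusedSectionVars false

variable {G : SimpleGraph V}

private def Inv1 (G : SimpleGraph V) (s t : Letter G) (R : Word G) (C : Word G) : Prop :=
  ∃ C₁ C₂ C₃, C = C₁ ++ s :: (C₂ ++ t :: C₃) ∧ (∀ r ∈ C₂, LCommute G s r) ∧
    WEquiv G R (C₁ ++ (C₂ ++ t :: C₃))

private lemma inv1_step {s t : Letter G} (hst : s.1 ⊆ t.1) {R C C' : Word G}
    (hsw : LSwapStep G C C') (hI : Inv1 G s t R C) : Inv1 G s t R C' := by
  obtain ⟨C₁, C₂, C₃, hC, hcm, hR⟩ := hI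
  obtain ⟨α, β, x, y, hxy, h1, h2⟩ := hsw
  have heq : C₁ ++ s :: (C₂ ++ t :: C₃) = α ++ x :: y :: β := by rw [← hC, h1]
  rcases aux_loc2 heq with ⟨γ, hC₁, hβ⟩ | ⟨hC₁, hl₂⟩ | ⟨γ, hl₂, hα⟩
  · refine ⟨α ++ y :: x :: γ, C₂, C₃, by rw [h2, hβ]; simp, hcm, ?_⟩
    refine aux_weq_trans hR ?_
    rw [hC₁]
    have := aux_swap_single (G := G) (s := x) (t := y) α (γ ++ (C₂ ++ t :: C₃)) hxy
    simpa using this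
  · -- C₁ = α ++ [x], swapped pair (x, s)
    injection hl₂ with e1 e2
    subst e1
    refine ⟨α, x :: C₂, C₃, by rw [h2, ← e2]; simp, ?_, ?_⟩
    · intro r hr
      rcases List.mem_cons.mp hr with rfl | hr
      · exact aux_lcomm_symm hxy
      · exact hcm r hr
    · refine aux_weq_trans hR (aux_weq_of_eq ?_)
      rw [hC₁]; simp
  · match γ, hl₂, hα with
    | [], hl₂, hα =>
      simp only [List.nil_append] at hl₂
      injection hl₂ with e1 e2
      subst e1
      match C₂, hcm, e2 with
      | [], hcm, e2 =>
        simp only [List.nil_append] at e2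
        injection e2 with e3 _
        subst e3
        exact absurd hxy (aux_not_lcomm_of_subset hst)
      | z :: C₂', hcm, e2 =>
        simp only [List.cons_append] at e2
        injection e2 with e3 e4
        subst e3
        refine ⟨C₁ ++ [z], C₂', C₃, by rw [h2, hα, ← e4]; simp, ?_, ?_⟩
        · exact fun r hr => hcm r (by simp [hr])
        · refine aux_weq_trans hR (aux_weq_of_eq ?_)
          simp
    | s' :: γ', hl₂, hα =>
      simp only [List.cons_append] at hl₂
      injection hl₂ with e1 e2
      subst e1
      rcases aux_loc2 e2 with ⟨δ, hC₂, hβ⟩ | ⟨hC₂, hl₃⟩ | ⟨δ, hl₃, hγ'⟩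
      · -- swap inside C₂
        refine ⟨C₁, γ' ++ y :: x :: δ, C₃, by rw [h2, hα, hβ]; simp, ?_, ?_⟩
        · intro r hr
          apply hcm
          rw [hC₂]
          simp only [List.mem_append, List.mem_cons] at hr ⊢
          tauto
        · refine aux_weq_trans hR ?_
          rw [hC₂]
          have := aux_swap_single (G := G) (s := x) (t := y) (C₁ ++ γ') (δ ++ t :: C₃) hxy
          simpa using this
      · -- C₂ = γ' ++ [x], swapped pair (x, t)
        injection hl₃ with e3 e4
        subst e3
        refine ⟨C₁, γ', x :: C₃, by rw [h2, hα, ← e4]; simp, ?_, ?_⟩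
        · exact fun r hr => hcm r (by rw [hC₂]; simp [hr])
        · refine aux_weq_trans hR ?_
          rw [hC₂]
          have := aux_swap_single (G := G) (s := x) (t := t) (C₁ ++ γ') C₃ hxy
          simpa using this
      · match δ, hl₃, hγ' with
        | [], hl₃, hγ' =>
          simp only [List.nil_append] at hl₃
          injection hl₃ with e3 e4
          subst e3
          refine ⟨C₁, C₂ ++ [y], β, by rw [h2, hα, hγ']; simp, ?_, ?_⟩
          · intro r hr
            rcases List.mem_append.mp hr with hr | hr
            · exact hcm r hr
            · simp only [List.mem_singleton] at hr
              subst hr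
              exact aux_lcomm_symm (aux_mono hst (aux_lcomm_symm hxy))
          · refine aux_weq_trans hR ?_
            rw [e4]
            have := aux_swap_single (G := G) (s := t) (t := y) (C₁ ++ C₂) β hxy
            simpa using this
        | z :: δ', hl₃, hγ' =>
          simp only [List.cons_append] at hl₃
          injection hl₃ with e3 e4
          subst e3
          refine ⟨C₁, C₂, δ' ++ y :: x :: β, by rw [h2, hα, hγ']; simp, hcm, ?_⟩
          refine aux_weq_trans hR ?_
          rw [e4]
          have := aux_swap_single (G := G) (s := x) (t := y) (C₁ ++ (C₂ ++ t :: δ')) β hxy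
          simpa using this

end AuxLoc
section AuxLoc2
set_option linter.unusedSectionVars false

variable {G : SimpleGraph V}

lemma aux_loc {s t : Letter G} (hst : s.1 ⊆ t.1) {A B P Q : Word G}
    (h : WEquiv G (A ++ s :: t :: B) (P ++ Q)) :
    (∃ p₁ p₂, WEquiv G P (p₁ ++ s :: t :: p₂)) ∨
    (∃ q₁ q₂, WEquiv G Q (q₁ ++ s :: t :: q₂)) ∨
    (∃ p₁ p₂, WEquiv G P (p₁ ++ s :: p₂) ∧ (∀ r ∈ p₂, LCommute G s r) ∧
      WEquiv G (A ++ t :: B) ((p₁ ++ p₂) ++ Q)) := by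
  have hI : Inv1 G s t (A ++ t :: B) (P ++ Q) := by
    refine aux_rtg_invariant (P := Inv1 G s t (A ++ t :: B))
      (fun _ _ st hI => inv1_step hst st hI) h ⟨A, [], B, by simp, by simp, ?_⟩
    exact aux_weq_of_eq (by simp)
  obtain ⟨C₁, C₂, C₃, hPQ, hcm, hR⟩ := hI
  rcases List.append_eq_append_iff.mp hPQ with ⟨a', hC₁, hQ⟩ | ⟨c', hP, hcons⟩
  · refine Or.inr (Or.inl ⟨a' ++ C₂, C₃, ?_⟩)
    rw [hQ]
    have h1 : WEquiv G (s :: (C₂ ++ t :: C₃)) (C₂ ++ s :: t :: C₃) :=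
      aux_move_back hcm (t :: C₃)
    have := aux_weq_append_left a' h1
    exact aux_weq_trans this (aux_weq_of_eq (by simp))
  · match c', hP, hcons with
    | [], hP, hcons =>
      refine Or.inr (Or.inl ⟨C₂, C₃, ?_⟩)
      simp only [List.nil_append] at hcons
      rw [← hcons]
      exact aux_move_back hcm (t :: C₃)
    | s' :: c₂', hP, hcons =>
      simp only [List.cons_append] at hcons
      injection hcons with e1 e2
      subst e1
      rcases List.append_eq_append_iff.mp e2.symm with ⟨d, hC₂, hQ⟩ | ⟨d, hc₂', hd⟩
      · -- cross case : s in P, t in Q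
        refine Or.inr (Or.inr ⟨C₁, c₂', aux_weq_of_eq hP, ?_, ?_⟩)
        · exact fun r hr => hcm r (by rw [hC₂]; simp [hr])
        · refine aux_weq_trans hR (aux_weq_of_eq ?_)
          rw [hC₂, hQ]; simp
      · match d, hc₂', hd with
        | [], hc₂', hd =>
          simp only [List.nil_append] at hd
          simp only [List.append_nil] at hc₂'
          refine Or.inr (Or.inr ⟨C₁, c₂', aux_weq_of_eq hP, ?_, ?_⟩)
          · exact fun r hr => hcm r (by rwa [← hc₂'])
          · refine aux_weq_trans hR (aux_weq_of_eq ?_)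
            rw [hc₂', ← hd]; simp
        | z :: d', hc₂', hd =>
          simp only [List.cons_append] at hd
          injection hd with e3 e4
          subst e3
          refine Or.inl ⟨C₁ ++ C₂, d', ?_⟩
          rw [hP, hc₂']
          have h1 : WEquiv G (s :: (C₂ ++ t :: d')) (C₂ ++ s :: t :: d') :=
            aux_move_back hcm (t :: d')
          have := aux_weq_append_left C₁ h1
          exact aux_weq_trans (aux_weq_of_eq (by simp)) (aux_weq_trans this (aux_weq_of_eq (by simp)))

private def Inv2 (G : SimpleGraph V) (s t : Letter G) (R : Word G) (C : Word G) : Prop :=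
  ∃ C₁ C₂ C₃, C = C₁ ++ t :: (C₂ ++ s :: C₃) ∧ (∀ r ∈ C₂, LCommute G s r) ∧
    WEquiv G R (C₁ ++ t :: (C₂ ++ C₃))

private lemma inv2_step {s t : Letter G} (hst : s.1 ⊆ t.1) {R C C' : Word G}
    (hsw : LSwapStep G C C') (hI : Inv2 G s t R C) : Inv2 G s t R C' := by
  obtain ⟨C₁, C₂, C₃, hC, hcm, hR⟩ := hI
  obtain ⟨α, β, x, y, hxy, h1, h2⟩ := hsw
  have heq : C₁ ++ t :: (C₂ ++ s :: C₃) = α ++ x :: y :: β := by rw [← hC, h1]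
  rcases aux_loc2 heq with ⟨γ, hC₁, hβ⟩ | ⟨hC₁, hl₂⟩ | ⟨γ, hl₂, hα⟩
  · refine ⟨α ++ y :: x :: γ, C₂, C₃, by rw [h2, hβ]; simp, hcm, ?_⟩
    refine aux_weq_trans hR ?_
    rw [hC₁]
    have := aux_swap_single (G := G) (s := x) (t := y) α (γ ++ t :: (C₂ ++ C₃)) hxy
    simpa using this
  · -- C₁ = α ++ [x], swapped pair (x, t)
    injection hl₂ with e1 e2
    subst e1
    refine ⟨α, x :: C₂, C₃, by rw [h2, ← e2]; simp, ?_, ?_⟩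
    · intro r hr
      rcases List.mem_cons.mp hr with rfl | hr
      · exact aux_lcomm_symm (aux_mono hst hxy)
      · exact hcm r hr
    · refine aux_weq_trans hR ?_
      rw [hC₁]
      have := aux_swap_single (G := G) (s := x) (t := t) α (C₂ ++ C₃) hxy
      simpa using this
  · match γ, hl₂, hα with
    | [], hl₂, hα =>
      simp only [List.nil_append] at hl₂
      injection hl₂ with e1 e2
      subst e1
      match C₂, hcm, e2 with
      | [], hcm, e2 =>
        simp only [List.nil_append] at e2
        injection e2 with e3 _
        subst e3
        exact absurd (aux_lcomm_symm hxy) (aux_not_lcomm_of_subset hst)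
      | z :: C₂', hcm, e2 =>
        simp only [List.cons_append] at e2
        injection e2 with e3 e4
        subst e3
        refine ⟨C₁ ++ [z], C₂', C₃, by rw [h2, hα, ← e4]; simp, ?_, ?_⟩
        · exact fun r hr => hcm r (by simp [hr])
        · refine aux_weq_trans hR ?_
          have := aux_swap_single (G := G) (s := t) (t := z) C₁ (C₂' ++ C₃) hxy
          simpa using this
    | t' :: γ', hl₂, hα =>
      simp only [List.cons_append] at hl₂
      injection hl₂ with e1 e2
      subst e1
      rcases aux_loc2 e2 with ⟨δ, hC₂, hβ⟩ | ⟨hC₂, hl₃⟩ | ⟨δ, hl₃, hγ'⟩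
      · -- swap inside C₂
        refine ⟨C₁, γ' ++ y :: x :: δ, C₃, by rw [h2, hα, hβ]; simp, ?_, ?_⟩
        · intro r hr
          apply hcm
          rw [hC₂]
          simp only [List.mem_append, List.mem_cons] at hr ⊢
          tauto
        · refine aux_weq_trans hR ?_
          rw [hC₂]
          have := aux_swap_single (G := G) (s := x) (t := y) (C₁ ++ t :: γ') (δ ++ C₃) hxy
          simpa using this
      · -- C₂ = γ' ++ [x], swapped pair (x, s)
        injection hl₃ with e3 e4
        subst e3
        refine ⟨C₁, γ', x :: C₃, by rw [h2, hα, ← e4]; simp, ?_, ?_⟩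
        · exact fun r hr => hcm r (by rw [hC₂]; simp [hr])
        · refine aux_weq_trans hR (aux_weq_of_eq ?_)
          rw [hC₂]; simp
      · match δ, hl₃, hγ' with
        | [], hl₃, hγ' =>
          simp only [List.nil_append] at hl₃
          injection hl₃ with e3 e4
          subst e3
          refine ⟨C₁, C₂ ++ [y], β, by rw [h2, hα, hγ']; simp, ?_, ?_⟩
          · intro r hr
            rcases List.mem_append.mp hr with hr | hr
            · exact hcm r hr
            · simp only [List.mem_singleton] at hr
              subst hr
              exact hxy
          · refine aux_weq_trans hR (aux_weq_of_eq ?_)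
            rw [e4]; simp
        | z :: δ', hl₃, hγ' =>
          simp only [List.cons_append] at hl₃
          injection hl₃ with e3 e4
          subst e3
          refine ⟨C₁, C₂, δ' ++ y :: x :: β, by rw [h2, hα, hγ']; simp, hcm, ?_⟩
          refine aux_weq_trans hR ?_
          rw [e4]
          have := aux_swap_single (G := G) (s := x) (t := y) (C₁ ++ t :: (C₂ ++ δ')) β hxy
          simpa using this

lemma aux_loc' {s t : Letter G} (hst : s.1 ⊆ t.1) {A B P Q : Word G}
    (h : WEquiv G (A ++ t :: s :: B) (P ++ Q)) :
    (∃ p₁ p₂, WEquiv G P (p₁ ++ t :: s :: p₂)) ∨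
    (∃ q₁ q₂, WEquiv G Q (q₁ ++ t :: s :: q₂)) ∨
    (∃ q₁ q₂, WEquiv G Q (q₁ ++ s :: q₂) ∧ (∀ r ∈ q₁, LCommute G s r) ∧
      WEquiv G (A ++ t :: B) (P ++ (q₁ ++ q₂))) := by
  have hI : Inv2 G s t (A ++ t :: B) (P ++ Q) := by
    refine aux_rtg_invariant (P := Inv2 G s t (A ++ t :: B))
      (fun _ _ st hI => inv2_step hst st hI) h ⟨A, [], B, by simp, by simp, ?_⟩
    exact aux_weq_of_eq (by simp)
  obtain ⟨C₁, C₂, C₃, hPQ, hcm, hR⟩ := hI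
  rcases List.append_eq_append_iff.mp hPQ with ⟨a', hC₁, hQ⟩ | ⟨c', hP, hcons⟩
  · refine Or.inr (Or.inl ⟨a', C₂ ++ C₃, ?_⟩)
    rw [hQ]
    have h1 : WEquiv G (C₂ ++ s :: C₃) (s :: (C₂ ++ C₃)) := aux_move_front hcm C₃
    exact aux_weq_append_left a' (aux_weq_append_left [t] h1)
  · match c', hP, hcons with
    | [], hP, hcons =>
      refine Or.inr (Or.inl ⟨[], C₂ ++ C₃, ?_⟩)
      simp only [List.nil_append] at hcons
      rw [← hcons]
      have h1 : WEquiv G (C₂ ++ s :: C₃) (s :: (C₂ ++ C₃)) := aux_move_front hcm C₃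
      exact aux_weq_append_left [t] h1
    | t' :: c₂', hP, hcons =>
      simp only [List.cons_append] at hcons
      injection hcons with e1 e2
      subst e1
      rcases List.append_eq_append_iff.mp e2.symm with ⟨d, hC₂, hQ⟩ | ⟨d, hc₂', hd⟩
      · -- cross case : t in P, s in Q
        refine Or.inr (Or.inr ⟨d, C₃, aux_weq_of_eq hQ, ?_, ?_⟩)
        · exact fun r hr => hcm r (by rw [hC₂]; simp [hr])
        · refine aux_weq_trans hR (aux_weq_of_eq ?_)
          rw [hC₂, hP]; simp
      · match d, hc₂', hd with
        | [], hc₂', hd =>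
          simp only [List.nil_append] at hd
          simp only [List.append_nil] at hc₂'
          refine Or.inr (Or.inr ⟨[], C₃, aux_weq_of_eq (by simp [← hd]), by simp, ?_⟩)
          refine aux_weq_trans hR (aux_weq_of_eq ?_)
          rw [hP, hc₂']; simp
        | z :: d', hc₂', hd =>
          simp only [List.cons_append] at hd
          injection hd with e3 e4
          subst e3
          refine Or.inl ⟨C₁, C₂ ++ d', ?_⟩
          rw [hP, hc₂']
          have h1 : WEquiv G (C₂ ++ s :: d') (s :: (C₂ ++ d')) := aux_move_front hcm d'
          have := aux_weq_append_left (C₁ ++ [t]) h1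
          exact aux_weq_trans (aux_weq_of_eq (by simp)) (aux_weq_trans this (aux_weq_of_eq (by simp)))

end AuxLoc2

section AuxMain
set_option linter.unusedSectionVars false

variable {G : SimpleGraph V}

private lemma aux_step {u v : Word G} (hu : WIsReduced G u) (hv : WIsReduced G v)
    {b c : Word G} (hst : NSStep G b c) {p q e f : Word G}
    (h1 : WEquiv G b (p ++ q)) (h2 : WEquiv G u (p ++ e)) (h3 : WEquiv G v (f ++ q)) :
    ∃ p' q' e' f', WEquiv G c (p' ++ q') ∧ WEquiv G u (p' ++ e') ∧
      WEquiv G v (f' ++ q') := by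
  rcases hst with hsw | habs
  · exact ⟨p, q, e, f,
      aux_weq_trans (aux_weq_symm (Relation.ReflTransGen.single hsw)) h1, h2, h3⟩
  · obtain ⟨a', b', s, t, hsub, hor, hc⟩ := habs
    rcases hor with hb | hb
    · -- b = a' ++ s :: t :: b'
      have h1' : WEquiv G (a' ++ s :: t :: b') (p ++ q) := by rw [← hb]; exact h1
      rcases aux_loc hsub h1' with ⟨p₁, p₂, hP⟩ | ⟨q₁, q₂, hQ⟩ | ⟨p₁, p₂, hP, hcm, hres⟩
      · exfalso
        apply hu
        have hx : HasPat G ((p₁ ++ s :: t :: p₂) ++ e) :=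
          ⟨p₁, [], p₂ ++ e, s, t, by simp, Or.inl ⟨hsub, by simp⟩⟩
        exact aux_haspat_equiv
          (aux_weq_symm (aux_weq_trans h2 (aux_weq_append_right e hP))) hx
      · exfalso
        apply hv
        have hx : HasPat G (f ++ (q₁ ++ s :: t :: q₂)) :=
          ⟨f ++ q₁, [], q₂, s, t, by simp, Or.inl ⟨hsub, by simp⟩⟩
        exact aux_haspat_equiv
          (aux_weq_symm (aux_weq_trans h3 (aux_weq_append_left f hQ))) hx
      · refine ⟨p₁ ++ p₂, q, s :: e, f, by rw [hc]; exact hres, ?_, h3⟩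
        have ha : WEquiv G u ((p₁ ++ s :: p₂) ++ e) :=
          aux_weq_trans h2 (aux_weq_append_right e hP)
        have h5 : WEquiv G (p₁ ++ (s :: (p₂ ++ e))) (p₁ ++ (p₂ ++ s :: e)) :=
          aux_weq_append_left p₁ (aux_weq_symm (aux_move_front hcm e))
        exact aux_weq_trans ha (aux_weq_trans (aux_weq_of_eq (by simp))
          (aux_weq_trans h5 (aux_weq_of_eq (by simp))))
    · -- b = a' ++ t :: s :: b'
      have h1' : WEquiv G (a' ++ t :: s :: b') (p ++ q) := by rw [← hb]; exact h1
      rcases aux_loc' hsub h1' with ⟨p₁, p₂, hP⟩ | ⟨q₁, q₂, hQ⟩ | ⟨q₁, q₂, hQ, hcm, hres⟩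
      · exfalso
        apply hu
        have hx : HasPat G ((p₁ ++ t :: s :: p₂) ++ e) :=
          ⟨p₁, [], p₂ ++ e, t, s, by simp, Or.inr ⟨hsub, by simp⟩⟩
        exact aux_haspat_equiv
          (aux_weq_symm (aux_weq_trans h2 (aux_weq_append_right e hP))) hx
      · exfalso
        apply hv
        have hx : HasPat G (f ++ (q₁ ++ t :: s :: q₂)) :=
          ⟨f ++ q₁, [], q₂, t, s, by simp, Or.inr ⟨hsub, by simp⟩⟩
        exact aux_haspat_equiv
          (aux_weq_symm (aux_weq_trans h3 (aux_weq_append_left f hQ))) hx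
      · refine ⟨p, q₁ ++ q₂, e, f ++ [s], by rw [hc]; exact hres, h2, ?_⟩
        have ha : WEquiv G v (f ++ (q₁ ++ s :: q₂)) :=
          aux_weq_trans h3 (aux_weq_append_left f hQ)
        have h5 : WEquiv G (f ++ (q₁ ++ s :: q₂)) (f ++ (s :: (q₁ ++ q₂))) :=
          aux_weq_append_left f (aux_move_front hcm q₂)
        exact aux_weq_trans ha (aux_weq_trans h5 (aux_weq_of_eq (by simp)))

private lemma aux_main {u v : Word G} (hu : WIsReduced G u) (hv : WIsReduced G v)
    {W r : Word G} (hch : Relation.ReflTransGen (NSStep G) W r) :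
    ∀ p q e f, WEquiv G W (p ++ q) → WEquiv G u (p ++ e) → WEquiv G v (f ++ q) →
    ∃ p' q' e' f', WEquiv G r (p' ++ q') ∧ WEquiv G u (p' ++ e') ∧
      WEquiv G v (f' ++ q') := by
  induction hch with
  | refl => exact fun p q e f h1 h2 h3 => ⟨p, q, e, f, h1, h2, h3⟩
  | tail _ hst ih =>
    intro p q e f h1 h2 h3
    obtain ⟨p', q', e', f', g1, g2, g3⟩ := ih p q e f h1 h2 h3
    exact aux_step hu hv hst g1 g2 g3

end AuxMain


/-- If reduced words `u`, `v`, `x` satisfy `[u·v] ≈ u·x`, then `x` is a final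
subword of `v`; in particular `x` commutes with every word commuting with `v`. -/
theorem reduct_final_subword (G : SimpleGraph V) (u v x : Word G)
    (hu : WIsReduced G u) (hv : WIsReduced G v) (hx : WIsReduced G x)
    (h : ∃ r, NSRed G (u ++ v) r ∧ WEquiv G r (u ++ x)) :
    (∃ w, WEquiv G v (w ++ x)) ∧ ∀ y : Word G, WCommute G y v → WCommute G y x := by
  obtain ⟨r, ⟨hchain, _⟩, hr⟩ := h
  obtain ⟨p', q', e', f', g1, g2, g3⟩ :=
    aux_main hu hv hchain u v [] [] (aux_weq_refl _)
      (aux_weq_of_eq (by simp)) (aux_weq_of_eq (by simp))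
  have hqx : WEquiv G q' (e' ++ x) := by
    apply aux_cancel p'
    have l1 : WEquiv G (p' ++ q') (u ++ x) := aux_weq_trans (aux_weq_symm g1) hr
    have l2 : WEquiv G (u ++ x) ((p' ++ e') ++ x) := aux_weq_append_right x g2
    exact aux_weq_trans l1 (aux_weq_trans l2 (aux_weq_of_eq (by simp)))
  have hvx : WEquiv G v ((f' ++ e') ++ x) := by
    refine aux_weq_trans g3 ?_
    exact aux_weq_trans (aux_weq_append_left f' hqx) (aux_weq_of_eq (by simp))
  refine ⟨⟨f' ++ e', hvx⟩, ?_⟩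
  intro y hy s hs t ht
  have htv : t ∈ v := (aux_weq_perm hvx).mem_iff.mpr (by simp [ht])
  exact hy s hs t htv
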